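/- Treated-arm variance identity in the Hajek linearization (key computation of Lemma 3): Given a dependency structure B, writing μ̄¹ = (1/N) Σ_{i=1}^N E[μ_i^{(1)}(Z)], the following exact identity holds: N · Var[(1/(Np)) Σ_{i=1}^N Z_i (μ_i(Z) − μ̄¹)] = (1/(Np)) Σ_{i=1}^N E[(μ_i^{(1)}(Z) − μ̄¹)²] − (1/N) Σ_{i=1}^N (E[μ_i^{(1)}(Z)] − μ̄¹)² + (1/N) Σ_{i=1}^N Σ_{j∈B(i), j≠i} ( E[(μ_i(Z[i:=1][j:=1]) − μ̄¹)(μ_j(Z[i:=1][j:=1]) − μ̄¹)] − (E[μ_i^{(1)}(Z)] − μ̄¹)(E[μ_j^{(1)}(Z)] − μ̄¹) ). -/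

import Mathlib

/-- Expectation with respect to the Bernoulli(p) product measure on `{0,1}^N`. -/
noncomputable def bexp {N : ℕ} (p : ℝ) (f : (Fin N → Bool) → ℝ) : ℝ :=
  ∑ z : Fin N → Bool, (∏ i, if z i then p else 1 - p) * f z

/-- Variance under the Bernoulli(p) product measure. -/
noncomputable def bvar {N : ℕ} (p : ℝ) (f : (Fin N → Bool) → ℝ) : ℝ :=
  bexp p (fun z => (f z) ^ 2) - (bexp p f) ^ 2

/-- Covariance under the Bernoulli(p) product measure. -/
noncomputable def bcov {N : ℕ} (p : ℝ) (f g : (Fin N → Bool) → ℝ) : ℝ :=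
  bexp p (fun z => f z * g z) - bexp p f * bexp p g

/-- A dependency structure. -/
def DepStruct {N : ℕ} (p : ℝ) (μ : Fin N → (Fin N → Bool) → ℝ)
    (B : Fin N → Finset (Fin N)) : Prop :=
  (∀ i, i ∈ B i) ∧
  ∀ i j : Fin N, j ∉ B i →
    (∀ z : Fin N → Bool, μ i (Function.update z j false) = μ i (Function.update z j true)) ∧
    (∀ z : Fin N → Bool, μ j (Function.update z i false) = μ j (Function.update z i true)) ∧
    (∀ a b : Bool, bcov p (fun z => μ i (Function.update z i a))
        (fun z => μ j (Function.update z j b)) = 0)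

/-! ### Auxiliary lemmas -/

section Aux

variable {N : ℕ} {p : ℝ}

lemma weight_sum :
    ∑ z : Fin N → Bool, (∏ i, if z i then p else 1 - p) = (1:ℝ) := by
  classical
  calc ∑ z : Fin N → Bool, ∏ i, (if z i then p else 1-p)
      = ∏ _i : Fin N, ∑ b : Bool, (if b then p else 1-p) := by
        rw [Finset.prod_univ_sum, Fintype.piFinset_univ]
    _ = 1 := by simp

lemma bexp_congr {f g : (Fin N → Bool) → ℝ} (h : ∀ z, f z = g z) :
    bexp p f = bexp p g := by
  unfold bexp; exact Finset.sum_congr rfl fun z _ => by rw [h]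

lemma bexp_const (c : ℝ) : bexp (N := N) p (fun _ => c) = c := by
  unfold bexp
  rw [← Finset.sum_mul, weight_sum, one_mul]

lemma bexp_add (f g : (Fin N → Bool) → ℝ) :
    bexp p (fun z => f z + g z) = bexp p f + bexp p g := by
  unfold bexp
  rw [← Finset.sum_add_distrib]
  exact Finset.sum_congr rfl fun z _ => by ring

lemma bexp_const_mul (c : ℝ) (f : (Fin N → Bool) → ℝ) :
    bexp p (fun z => c * f z) = c * bexp p f := by
  unfold bexp
  rw [Finset.mul_sum]
  exact Finset.sum_congr rfl fun z _ => by ring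

lemma bexp_sub_const (f : (Fin N → Bool) → ℝ) (c : ℝ) :
    bexp p (fun z => f z - c) = bexp p f - c := by
  have h := bexp_add (p := p) f (fun _ => -c)
  rw [bexp_const] at h
  calc bexp p (fun z => f z - c) = bexp p (fun z => f z + (-c)) := by
        exact bexp_congr fun z => by ring
    _ = bexp p f + (-c) := h
    _ = bexp p f - c := by ring

lemma bexp_sum {ι : Type*} (s : Finset ι) (f : ι → (Fin N → Bool) → ℝ) :
    bexp p (fun z => ∑ i ∈ s, f i z) = ∑ i ∈ s, bexp p (f i) := by
  unfold bexp
  simp_rw [Finset.mul_sum]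
  exact Finset.sum_comm

/-- Integrating out the indicator of coordinate `i`. -/
lemma bexp_ind (i : Fin N) (g : (Fin N → Bool) → ℝ) :
    bexp p (fun z => (if z i then (1:ℝ) else 0) * g z)
      = p * bexp p (fun z => g (Function.update z i true)) := by
  classical
  unfold bexp
  have einv : Function.Involutive
      (fun z : Fin N → Bool => Function.update z i (!(z i))) := by
    intro z; funext j
    by_cases h : j = i
    · subst h; simp
    · simp [Function.update_of_ne h]
  set e := einv.toPerm with he_def
  have he : ∀ z : Fin N → Bool, e z = Function.update z i (!(z i)) := fun z => rfl
  set R : (Fin N → Bool) → ℝ :=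
    fun z => ∏ j ∈ Finset.univ.erase i, if z j then p else 1 - p with hRdef
  have hW : ∀ z : Fin N → Bool,
      (∏ j, if z j then p else 1 - p) = (if z i then p else 1 - p) * R z :=
    fun z => (Finset.mul_prod_erase Finset.univ _ (Finset.mem_univ i)).symm
  have hRu : ∀ (z : Fin N → Bool) (c : Bool), R (Function.update z i c) = R z := by
    intro z c
    exact Finset.prod_congr rfl fun j hj => by
      rw [Function.update_of_ne (Finset.ne_of_mem_erase hj)]
  have hWu : ∀ (z : Fin N → Bool) (c : Bool),
      (∏ j, if (Function.update z i c) j then p else 1 - p)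
        = (if c then p else 1 - p) * R z := by
    intro z c; rw [hW, Function.update_self, hRu]
  have hL : ∑ z : Fin N → Bool, (∏ j, if z j then p else 1 - p) * ((if z i then (1:ℝ) else 0) * g z)
      = ∑ z : Fin N → Bool, (if z i then p * R z * g z else 0) := by
    refine Finset.sum_congr rfl fun z _ => ?_
    by_cases h : z i
    · simp only [h, if_true, one_mul]
      rw [hW z]; simp [h]
    · simp [h]
  rw [hL]
  have key : ∑ z : Fin N → Bool, (∏ j, if z j then p else 1 - p) * g (Function.update z i true)
      = (∑ z : Fin N → Bool, (if z i then (∏ j, if z j then p else 1 - p) * g z else 0))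
        + ∑ z : Fin N → Bool, (if z i then 0 else (∏ j, if z j then p else 1 - p) * g (Function.update z i true)) := by
    rw [← Finset.sum_add_distrib]
    refine Finset.sum_congr rfl fun z _ => ?_
    by_cases h : z i
    · have hz : Function.update z i true = z := by rw [← h]; exact Function.update_eq_self i z
      simp [h, hz]
    · simp [h]
  have hS1 : ∑ z : Fin N → Bool, (if z i then (∏ j, if z j then p else 1 - p) * g z else 0)
      = ∑ z : Fin N → Bool, (if z i then p * R z * g z else 0) := by
    refine Finset.sum_congr rfl fun z _ => ?_
    by_cases h : z i
    · simp only [h, if_true]; rw [hW z]; simp [h]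
    · simp [h]
  have hS2 : ∑ z : Fin N → Bool, (if z i then 0 else (∏ j, if z j then p else 1 - p) * g (Function.update z i true))
      = ∑ z : Fin N → Bool, (if z i then (1 - p) * R z * g z else 0) := by
    rw [← Equiv.sum_comp e (fun z : Fin N → Bool =>
      if z i then 0 else (∏ j, if z j then p else 1 - p) * g (Function.update z i true))]
    refine Finset.sum_congr rfl fun z _ => ?_
    show (if (e z) i then (0:ℝ) else (∏ j, if (e z) j then p else 1 - p) * g (Function.update (e z) i true)) = _
    rw [he z, Function.update_self, Function.update_idem, hWu]
    by_cases h : z i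
    · have hz : Function.update z i true = z := by rw [← h]; exact Function.update_eq_self i z
      simp [h, hz]
    · simp [h]
  rw [key, hS1, hS2, mul_add, Finset.mul_sum, Finset.mul_sum, ← Finset.sum_add_distrib]
  refine Finset.sum_congr rfl fun z _ => ?_
  by_cases h : z i <;> simp [h] <;> ring

/-- Integrating out two indicators. -/
lemma bexp_ind_two {i j : Fin N} (hij : j ≠ i) (g : (Fin N → Bool) → ℝ) :
    bexp p (fun z => (if z i then (1:ℝ) else 0) * ((if z j then (1:ℝ) else 0) * g z))
      = p^2 * bexp p (fun z => g (Function.update (Function.update z i true) j true)) := by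
  rw [bexp_ind i]
  have h1 : bexp p (fun z => (if (Function.update z i true) j then (1:ℝ) else 0)
        * g (Function.update z i true))
      = bexp p (fun z => (if z j then (1:ℝ) else 0) * g (Function.update z i true)) :=
    bexp_congr fun z => by rw [Function.update_of_ne hij]
  rw [h1, bexp_ind j]
  have h2 : bexp p (fun z => g (Function.update (Function.update z j true) i true))
      = bexp p (fun z => g (Function.update (Function.update z i true) j true)) :=
    bexp_congr fun z => by rw [Function.update_comm hij]
  rw [h2]; ring

/-- A function that does not depend on coordinate `j` is unchanged under updates at `j`. -/
lemma nodep_update {α : Type*} {φ : (Fin N → Bool) → α} {j : Fin N}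
    (h : ∀ z, φ (Function.update z j false) = φ (Function.update z j true)) :
    ∀ (y : Fin N → Bool) (b : Bool), φ (Function.update y j b) = φ y := by
  intro y b
  have hy : Function.update y j (y j) = y := Function.update_eq_self j y
  cases b
  · cases hb : y j
    · have hyy : Function.update y j false = y := by rw [← hb]; exact hy
      rw [hyy]
    · have hyy : Function.update y j true = y := by rw [← hb]; exact hy
      rw [h y, hyy]
  · cases hb : y j
    · have hyy : Function.update y j false = y := by rw [← hb]; exact hy
      rw [← h y, hyy]
    · have hyy : Function.update y j true = y := by rw [← hb]; exact hy
      rw [hyy]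

/-- Covariance is invariant under subtracting constants. -/
lemma bexp_shift_prod (f g : (Fin N → Bool) → ℝ) (c : ℝ)
    (h : bexp p (fun z => f z * g z) = bexp p f * bexp p g) :
    bexp p (fun z => (f z - c) * (g z - c)) = (bexp p f - c) * (bexp p g - c) := by
  have e1 : bexp p (fun z => (f z - c) * (g z - c))
      = bexp p (fun z => f z * g z + ((-c) * f z + ((-c) * g z + c * c))) :=
    bexp_congr fun z => by ring
  rw [e1, bexp_add, bexp_add, bexp_add, bexp_const_mul, bexp_const_mul, bexp_const, h]
  ring

lemma bvar_const_mul (c : ℝ) (f : (Fin N → Bool) → ℝ) :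
    bvar p (fun z => c * f z) = c^2 * bvar p f := by
  unfold bvar
  have h1 : bexp p (fun z => (c * f z)^2) = c^2 * bexp p (fun z => (f z)^2) := by
    rw [← bexp_const_mul]
    exact bexp_congr fun z => by ring
  rw [h1, bexp_const_mul]
  ring

lemma bvar_sum (a : Fin N → (Fin N → Bool) → ℝ) :
    bvar p (fun z => ∑ i, a i z)
      = ∑ i, ∑ j, (bexp p (fun z => a i z * a j z) - bexp p (a i) * bexp p (a j)) := by
  unfold bvar
  have h1 : bexp p (fun z => (∑ i, a i z)^2)
      = ∑ i, ∑ j, bexp p (fun z => a i z * a j z) := by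
    have e : bexp p (fun z => (∑ i, a i z)^2)
        = bexp p (fun z => ∑ i, ∑ j, a i z * a j z) :=
      bexp_congr fun z => by rw [sq, Finset.sum_mul_sum]
    rw [e, bexp_sum]
    exact Finset.sum_congr rfl fun i _ => bexp_sum _ _
  have h2 : bexp p (fun z => ∑ i, a i z) = ∑ i, bexp p (a i) := bexp_sum _ _
  rw [h1, h2, sq, Finset.sum_mul_sum, ← Finset.sum_sub_distrib]
  exact Finset.sum_congr rfl fun i _ => by rw [← Finset.sum_sub_distrib]

end Aux

/-- Treated-arm variance identity in the Hajek linearization (key computation of Lemma 3). -/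
theorem hajek_treated_arm_variance
    (N : ℕ) (hN : 1 ≤ N) (p : ℝ) (hp0 : 0 < p) (hp1 : p < 1)
    (μ : Fin N → (Fin N → Bool) → ℝ) (B : Fin N → Finset (Fin N))
    (hB : DepStruct p μ B)
    (mu1 : ℝ)
    (hmu1 : mu1 = (1 / N) * ∑ i, bexp p (fun z => μ i (Function.update z i true))) :
    (N : ℝ) * bvar p (fun z =>
        (1 / (N * p)) * ∑ i, (if z i then (1 : ℝ) else 0) * (μ i z - mu1))
      = (1 / (N * p)) * ∑ i, bexp p (fun z => (μ i (Function.update z i true) - mu1) ^ 2)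
        - (1 / N) * ∑ i, (bexp p (fun z => μ i (Function.update z i true)) - mu1) ^ 2
        + (1 / N) * ∑ i, ∑ j ∈ (B i).erase i,
            (bexp p (fun z =>
                (μ i (Function.update (Function.update z i true) j true) - mu1)
                  * (μ j (Function.update (Function.update z i true) j true) - mu1))
              - (bexp p (fun z => μ i (Function.update z i true)) - mu1)
                  * (bexp p (fun z => μ j (Function.update z j true)) - mu1)) := by
  classical
  have hpne : p ≠ 0 := ne_of_gt hp0
  have hNne : (N:ℝ) ≠ 0 := Nat.cast_ne_zero.mpr (by omega)
  obtain ⟨hBmem, hBdep⟩ := hB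
  -- abbreviations
  set a : Fin N → (Fin N → Bool) → ℝ :=
    fun i z => (if z i then (1:ℝ) else 0) * (μ i z - mu1) with ha
  set E : Fin N → ℝ := fun i => bexp p (fun z => μ i (Function.update z i true)) with hE
  set Q : Fin N → ℝ :=
    fun i => bexp p (fun z => (μ i (Function.update z i true) - mu1) ^ 2) with hQ
  set P : Fin N → Fin N → ℝ := fun i j => bexp p (fun z =>
      (μ i (Function.update (Function.update z i true) j true) - mu1)
        * (μ j (Function.update (Function.update z i true) j true) - mu1)) with hP
  -- expectations of the a i
  have hfa : ∀ i, bexp p (a i) = p * (E i - mu1) := by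
    intro i
    have h1 : bexp p (a i) = p * bexp p (fun z => μ i (Function.update z i true) - mu1) := by
      rw [ha]; exact bexp_ind i (fun z => μ i z - mu1)
    rw [h1, bexp_sub_const, hE]
  -- diagonal second moments
  have hdiag : ∀ i, bexp p (fun z => a i z * a i z) = p * Q i := by
    intro i
    have h1 : bexp p (fun z => a i z * a i z)
        = bexp p (fun z => (if z i then (1:ℝ) else 0) * ((μ i z - mu1) ^ 2)) := by
      refine bexp_congr fun z => ?_
      rw [ha]
      by_cases h : z i <;> simp [h] <;> ring
    rw [h1, bexp_ind i (fun z => (μ i z - mu1) ^ 2), hQ]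
  -- off-diagonal second moments
  have hoff : ∀ i j : Fin N, j ≠ i →
      bexp p (fun z => a i z * a j z) = p^2 * P i j := by
    intro i j hij
    have h1 : bexp p (fun z => a i z * a j z)
        = bexp p (fun z => (if z i then (1:ℝ) else 0)
            * ((if z j then (1:ℝ) else 0) * ((μ i z - mu1) * (μ j z - mu1)))) := by
      refine bexp_congr fun z => ?_
      rw [ha]; ring
    rw [h1, bexp_ind_two hij (fun z => (μ i z - mu1) * (μ j z - mu1)), hP]
  -- vanishing of off-diagonal covariances outside B i
  have hvanish : ∀ i j : Fin N, j ≠ i → j ∉ B i →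
      bexp p (fun z => a i z * a j z) - bexp p (a i) * bexp p (a j) = 0 := by
    intro i j hij hjB
    obtain ⟨hd1, hd2, hd3⟩ := hBdep i j hjB
    have nd1 : ∀ (y : Fin N → Bool) (b : Bool),
        μ i (Function.update y j b) = μ i y := nodep_update hd1
    have nd2 : ∀ (y : Fin N → Bool) (b : Bool),
        μ j (Function.update y i b) = μ j y := nodep_update hd2
    have hij' : i ≠ j := fun h => hij h.symm
    have hPij : P i j = bexp p (fun z =>
        (μ i (Function.update z i true) - mu1) * (μ j (Function.update z j true) - mu1)) := by
      rw [hP]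
      refine bexp_congr fun z => ?_
      rw [nd1 (Function.update z i true) true,
        show Function.update (Function.update z i true) j true
            = Function.update (Function.update z j true) i true from
          Function.update_comm hij' true true z,
        nd2 (Function.update z j true) true]
    have hcov := hd3 true true
    unfold bcov at hcov
    have hmul : bexp p (fun z => μ i (Function.update z i true) * μ j (Function.update z j true))
        = bexp p (fun z => μ i (Function.update z i true))
          * bexp p (fun z => μ j (Function.update z j true)) := by
      linarith [hcov]
    have hshift := bexp_shift_prod (p := p)
      (fun z => μ i (Function.update z i true))
      (fun z => μ j (Function.update z j true)) mu1 hmul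
    rw [hoff i j hij, hfa i, hfa j, hPij, hshift, hE]
    ring
  -- step 1 : expand the variance
  have step1 : bvar p (fun z =>
        (1 / ((N:ℝ) * p)) * ∑ i, (if z i then (1 : ℝ) else 0) * (μ i z - mu1))
      = (1/((N:ℝ)*p))^2 * ∑ i, ∑ j,
          (bexp p (fun z => a i z * a j z) - bexp p (a i) * bexp p (a j)) := by
    have h0 : (fun z : Fin N → Bool =>
        (1 / ((N:ℝ) * p)) * ∑ i, (if z i then (1 : ℝ) else 0) * (μ i z - mu1))
        = fun z => (1 / ((N:ℝ) * p)) * ∑ i, a i z := by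
      funext z; rw [ha]
    rw [h0, bvar_const_mul, bvar_sum]
  -- per-i reduction of the double sum
  have step2 : ∀ i, (∑ j, (bexp p (fun z => a i z * a j z) - bexp p (a i) * bexp p (a j)))
      = p * Q i - (p * (E i - mu1))^2
        + p^2 * ∑ j ∈ (B i).erase i, (P i j - (E i - mu1) * (E j - mu1)) := by
    intro i
    have hsplit : (∑ j, (bexp p (fun z => a i z * a j z) - bexp p (a i) * bexp p (a j)))
        = (∑ j ∈ Finset.univ.erase i,
            (bexp p (fun z => a i z * a j z) - bexp p (a i) * bexp p (a j)))
          + (bexp p (fun z => a i z * a i z) - bexp p (a i) * bexp p (a i)) :=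
      (Finset.sum_erase_add _ _ (Finset.mem_univ i)).symm
    have hsub : (∑ j ∈ Finset.univ.erase i,
          (bexp p (fun z => a i z * a j z) - bexp p (a i) * bexp p (a j)))
        = ∑ j ∈ (B i).erase i,
            (bexp p (fun z => a i z * a j z) - bexp p (a i) * bexp p (a j)) := by
      refine (Finset.sum_subset ?_ ?_).symm
      · exact Finset.erase_subset_erase i (Finset.subset_univ _)
      · intro j hj hjB
        have hji : j ≠ i := (Finset.mem_erase.mp hj).1
        have : j ∉ B i := fun hmem => hjB (Finset.mem_erase.mpr ⟨hji, hmem⟩)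
        exact hvanish i j hji this
    have hBsum : (∑ j ∈ (B i).erase i,
          (bexp p (fun z => a i z * a j z) - bexp p (a i) * bexp p (a j)))
        = ∑ j ∈ (B i).erase i, p^2 * (P i j - (E i - mu1) * (E j - mu1)) := by
      refine Finset.sum_congr rfl fun j hj => ?_
      have hji : j ≠ i := (Finset.mem_erase.mp hj).1
      rw [hoff i j hji, hfa i, hfa j]
      ring
    rw [hsplit, hsub, hBsum, hdiag i, hfa i, ← Finset.mul_sum]
    ring
  -- assemble
  rw [step1]
  have hdouble : (∑ i, ∑ j,
      (bexp p (fun z => a i z * a j z) - bexp p (a i) * bexp p (a j)))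
      = ∑ i, (p * Q i - (p * (E i - mu1))^2
          + p^2 * ∑ j ∈ (B i).erase i, (P i j - (E i - mu1) * (E j - mu1))) :=
    Finset.sum_congr rfl fun i _ => step2 i
  rw [hdouble]
  have key : (N:ℝ) * ((1/((N:ℝ)*p))^2 * ∑ i, (p * Q i - (p * (E i - mu1))^2
        + p^2 * ∑ j ∈ (B i).erase i, (P i j - (E i - mu1) * (E j - mu1))))
      = (1/((N:ℝ)*p)) * ∑ i, Q i - (1/(N:ℝ)) * ∑ i, (E i - mu1)^2
        + (1/(N:ℝ)) * ∑ i, ∑ j ∈ (B i).erase i, (P i j - (E i - mu1) * (E j - mu1)) := by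
    have l1 : ∀ (s : Finset (Fin N)) (c : ℝ) (f : Fin N → ℝ),
        c * ∑ i ∈ s, f i = ∑ i ∈ s, c * f i := fun s c f => Finset.mul_sum s f c
    rw [l1, l1, l1, l1, l1, ← Finset.sum_sub_distrib, ← Finset.sum_add_distrib]
    refine Finset.sum_congr rfl fun i _ => ?_
    field_simp
  rw [key]
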